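/- Let n ≥ 1, let d₁, …, dₙ be positive integers and e₁, …, eₙ integers. Let H = {(s₁, …, sₙ, t) ∈ (ℂˣ)ⁿ × ℂˣ : sᵢ^{dᵢ} = t^{eᵢ} for all i} with the subspace topology, let H⁰ be the connected component of the identity in H, and set r = lcm over i of dᵢ / gcd(dᵢ, eᵢ) (with gcd(dᵢ,0) = dᵢ). Then the group homomorphism H⁰ → ℂˣ given by (s₁, …, sₙ, t) ↦ t is surjective and every one of its fibers has exactly r elements. -/

import Mathlib

open Finset



private lemma aux_zpow_sum {G : Type*} [CommGroup G] (a : G) {ι : Type*} (s : Finset ι)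
    (f : ι → ℤ) : a ^ (∑ i ∈ s, f i) = ∏ i ∈ s, a ^ f i := by
  induction s using Finset.cons_induction with
  | empty => simp
  | cons b s hb ih => rw [Finset.sum_cons, Finset.prod_cons, zpow_add, ih]

private lemma aux_bezout {ι : Type*} (s : Finset ι) (f : ι → ℤ) :
    ∃ w : ι → ℤ, (∑ i ∈ s, w i * f i) = s.gcd f := by
  classical
  induction s using Finset.induction_on with
  | empty => exact ⟨0, by simp⟩
  | @insert a s ha ih =>
    obtain ⟨w, hw⟩ := ih
    refine ⟨fun i => if i = a then Int.gcdA (f a) (s.gcd f)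
      else w i * Int.gcdB (f a) (s.gcd f), ?_⟩
    dsimp only
    rw [Finset.gcd_insert, Finset.sum_insert ha, if_pos rfl, ← Int.coe_gcd,
      Int.gcd_eq_gcd_ab]
    have h2 : (∑ i ∈ s, (if i = a then Int.gcdA (f a) (s.gcd f)
        else w i * Int.gcdB (f a) (s.gcd f)) * f i)
        = (∑ i ∈ s, w i * f i) * Int.gcdB (f a) (s.gcd f) := by
      rw [Finset.sum_mul]
      refine Finset.sum_congr rfl fun i hi => ?_
      rw [if_neg (by rintro rfl; exact ha hi)]; ring
    rw [h2, hw]; ring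

private lemma aux_pow_dvd_lcm {ι : Type*} (p k : ℕ) (hp : p.Prime) (s : Finset ι)
    (f : ι → ℕ) (hf : ∀ i ∈ s, f i ≠ 0) (h : p ^ k ∣ s.lcm f) (hk : k ≠ 0) :
    ∃ i ∈ s, p ^ k ∣ f i := by
  classical
  induction s using Finset.induction_on with
  | empty =>
    simp only [Finset.lcm_empty, Nat.dvd_one] at h
    exact absurd h (Nat.one_lt_pow hk hp.one_lt).ne'
  | @insert a s ha ih =>
    rw [Finset.lcm_insert] at h
    have hfa : f a ≠ 0 := hf a (Finset.mem_insert_self a s)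
    have hsl : s.lcm f ≠ 0 := by
      intro h0
      rw [Finset.lcm_eq_zero_iff] at h0
      obtain ⟨i, hi, hi0⟩ := h0
      exact hf i (Finset.mem_insert_of_mem hi) hi0
    have hdl : p ^ k ∣ Nat.lcm (f a) (s.lcm f) := h
    rw [Nat.Prime.pow_dvd_iff_le_factorization hp (Nat.lcm_ne_zero hfa hsl),
      Nat.factorization_lcm hfa hsl, Finsupp.sup_apply, le_sup_iff] at hdl
    rcases hdl with h1 | h2
    · exact ⟨a, Finset.mem_insert_self a s,
        (Nat.Prime.pow_dvd_iff_le_factorization hp hfa).2 h1⟩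
    · obtain ⟨i, hi, hdvd⟩ := ih (fun i hi => hf i (Finset.mem_insert_of_mem hi))
        ((Nat.Prime.pow_dvd_iff_le_factorization hp hsl).2 h2)
      exact ⟨i, Finset.mem_insert_of_mem hi, hdvd⟩
private lemma aux_prod_zpow {G : Type*} [CommGroup G] {ι : Type*} (s : Finset ι)
    (f : ι → G) (k : ℤ) : (∏ i ∈ s, f i) ^ k = ∏ i ∈ s, f i ^ k := by
  induction s using Finset.cons_induction with
  | empty => simp
  | cons b s hb ih => rw [Finset.prod_cons, Finset.prod_cons, mul_zpow, ih]
private lemma aux_r_pos (n : ℕ) (d e : Fin n → ℤ) (hd : ∀ i, 1 ≤ d i) :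
    (Finset.univ.lcm fun i => (d i).toNat / Int.gcd (d i) (e i)) ≠ 0 := by
  intro h0
  rw [Finset.lcm_eq_zero_iff] at h0
  obtain ⟨i, -, hi⟩ := h0
  have hg : 0 < Int.gcd (d i) (e i) := Int.gcd_pos_iff.2 (Or.inl (by have := hd i; omega))
  have hdt : 0 < (d i).toNat := by have := hd i; omega
  have hgd : Int.gcd (d i) (e i) ∣ (d i).toNat := by
    have h1 : Int.gcd (d i) (e i) ∣ (d i).natAbs := Nat.gcd_dvd_left _ _
    have h2 : (d i).natAbs = (d i).toNat := by have := hd i; omega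
    rwa [h2] at h1
  have : 0 < (d i).toNat / Int.gcd (d i) (e i) := Nat.div_pos (Nat.le_of_dvd hdt hgd) hg
  omega

private lemma aux_arith (n : ℕ) (d e : Fin n → ℤ) (hd : ∀ i, 1 ≤ d i) :
    ∃ (c : Fin n → ℤ) (α : Fin n → ℤ) (β : ℤ),
      (∀ i, c i * d i =
        (((Finset.univ.lcm fun i => (d i).toNat / Int.gcd (d i) (e i)) : ℕ) : ℤ) * e i) ∧
      (∑ i, α i * c i)
        + β * (((Finset.univ.lcm fun i => (d i).toNat / Int.gcd (d i) (e i)) : ℕ) : ℤ) = 1 := by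
  classical
  set q : Fin n → ℕ := fun i => (d i).toNat / Int.gcd (d i) (e i) with hqdef
  set r : ℕ := Finset.univ.lcm q with hrdef
  have hr0 : r ≠ 0 := aux_r_pos n d e hd
  have hg0 : ∀ i, 0 < Int.gcd (d i) (e i) := fun i =>
    Int.gcd_pos_iff.2 (Or.inl (by have := hd i; omega))
  have hgd : ∀ i, ((Int.gcd (d i) (e i) : ℕ) : ℤ) ∣ d i := fun i => Int.gcd_dvd_left _ _
  have hge : ∀ i, ((Int.gcd (d i) (e i) : ℕ) : ℤ) ∣ e i := fun i => Int.gcd_dvd_right _ _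
  have hqcast : ∀ i, (q i : ℤ) = d i / ((Int.gcd (d i) (e i) : ℕ) : ℤ) := by
    intro i
    have h2 : ((d i).toNat : ℤ) = d i := by have := hd i; omega
    rw [hqdef]
    push_cast [Int.natCast_ediv]
    rw [h2]
  have hqd : ∀ i, d i = ((Int.gcd (d i) (e i) : ℕ) : ℤ) * (q i : ℤ) := by
    intro i; rw [hqcast i, Int.mul_ediv_cancel' (hgd i)]
  have hq0 : ∀ i, q i ≠ 0 := by
    intro i
    have hdt : 0 < (d i).toNat := by have := hd i; omega
    have hgdn : Int.gcd (d i) (e i) ∣ (d i).toNat := by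
      have h1 : Int.gcd (d i) (e i) ∣ (d i).natAbs := Nat.gcd_dvd_left _ _
      have h2 : (d i).natAbs = (d i).toNat := by have := hd i; omega
      rwa [h2] at h1
    have : 0 < q i := Nat.div_pos (Nat.le_of_dvd hdt hgdn) (hg0 i)
    omega
  set e' : Fin n → ℤ := fun i => e i / ((Int.gcd (d i) (e i) : ℕ) : ℤ) with he'def
  have he : ∀ i, e i = ((Int.gcd (d i) (e i) : ℕ) : ℤ) * e' i := fun i =>
    (Int.mul_ediv_cancel' (hge i)).symm
  have cop : ∀ i, Int.gcd ((q i : ℤ)) (e' i) = 1 := by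
    intro i
    have h := Int.gcd_div_gcd_div_gcd (hg0 i)
    rw [← hqcast i] at h
    exact h
  have hqr : ∀ i, q i ∣ r := fun i => Finset.dvd_lcm (Finset.mem_univ i)
  set m : Fin n → ℕ := fun i => r / q i with hmdef
  have hm : ∀ i, q i * m i = r := fun i => Nat.mul_div_cancel' (hqr i)
  set c : Fin n → ℤ := fun i => (m i : ℤ) * e' i with hcdef
  have hc : ∀ i, c i * d i = (r : ℤ) * e i := by
    intro i
    have hr' : (r : ℤ) = (q i : ℤ) * (m i : ℤ) := by exact_mod_cast (hm i).symm
    rw [hcdef]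
    dsimp only
    rw [hqd i]
    nth_rewrite 2 [he i]
    rw [hr']
    ring
  -- Bézout
  set v : Fin (n + 1) → ℤ := Fin.cons (r : ℤ) c with hvdef
  obtain ⟨w, hw⟩ := aux_bezout Finset.univ v
  set G : ℤ := Finset.univ.gcd v with hGdef
  have hGr : G ∣ (r : ℤ) := by
    have := Finset.gcd_dvd (f := v) (Finset.mem_univ (0 : Fin (n + 1)))
    rwa [hvdef, Fin.cons_zero] at this
  have hGc : ∀ i, G ∣ c i := by
    intro i
    have := Finset.gcd_dvd (f := v) (Finset.mem_univ (Fin.succ i))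
    rwa [hvdef, Fin.cons_succ] at this
  have hGna : G.natAbs = 1 := by
    by_contra hne
    rcases Nat.eq_zero_or_pos G.natAbs with h0 | hpos
    · have hG0 : G = 0 := Int.natAbs_eq_zero.mp h0
      rw [hG0] at hGr
      have : (r : ℤ) = 0 := (zero_dvd_iff).mp hGr
      exact hr0 (by exact_mod_cast this)
    · obtain ⟨p, hp, hpG⟩ := Nat.exists_prime_and_dvd hne
      have hpGZ : (p : ℤ) ∣ G :=
        dvd_trans (Int.natCast_dvd_natCast.mpr hpG) (Int.natAbs_dvd.mpr dvd_rfl)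
      have hpr : p ∣ r := Int.natCast_dvd_natCast.mp (hpGZ.trans hGr)
      have hpc : ∀ i, (p : ℤ) ∣ c i := fun i => hpGZ.trans (hGc i)
      have hk1 : 0 < r.factorization p := hp.factorization_pos_of_dvd hr0 hpr
      have hpk : p ^ r.factorization p ∣ r := Nat.ordProj_dvd r p
      obtain ⟨i, -, hpqi⟩ := aux_pow_dvd_lcm p (r.factorization p) hp Finset.univ q
        (fun i _ => hq0 i) (by rwa [← hrdef]) hk1.ne'
      have hpcZ := hpc i
      rw [hcdef] at hpcZ
      have hpZprime : Prime (p : ℤ) := Nat.prime_iff_prime_int.mp hp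
      rcases hpZprime.dvd_mul.mp hpcZ with hpm | hpe'
      · have hpm' : p ∣ m i := Int.natCast_dvd_natCast.mp hpm
        have hdvd : p ^ (r.factorization p + 1) ∣ q i * m i := by
          rw [pow_succ]
          exact mul_dvd_mul hpqi hpm'
        rw [hm i] at hdvd
        exact Nat.pow_succ_factorization_not_dvd hr0 hp hdvd
      · have hpq : (p : ℤ) ∣ (q i : ℤ) :=
          Int.natCast_dvd_natCast.mpr ((dvd_pow_self p hk1.ne').trans hpqi)
        have h1 : (p : ℤ) ∣ (Int.gcd ((q i : ℤ)) (e' i) : ℤ) := Int.dvd_coe_gcd hpq hpe'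
        rw [cop i] at h1
        have : p ∣ 1 := by exact_mod_cast h1
        exact hp.one_lt.ne' (Nat.dvd_one.mp this)
  obtain ⟨w', hw'⟩ : ∃ w' : Fin (n + 1) → ℤ, (∑ j, w' j * v j) = 1 := by
    have hG1 : G = 1 ∨ G = -1 := by omega
    rcases hG1 with h1 | h1
    · exact ⟨w, by rw [hw, h1]⟩
    · refine ⟨fun j => -w j, ?_⟩
      have : (∑ j, -w j * v j) = -(∑ j, w j * v j) := by
        rw [← Finset.sum_neg_distrib]
        exact Finset.sum_congr rfl fun j _ => by ring
      rw [this, hw, h1]; ring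
  refine ⟨c, fun i => w' i.succ, w' 0, hc, ?_⟩
  rw [Fin.sum_univ_succ] at hw'
  simp only [hvdef, Fin.cons_zero, Fin.cons_succ] at hw'
  linarith [hw']
private lemma aux_main (n : ℕ) (d e : Fin n → ℤ)
    (hd : ∀ i, 1 ≤ d i)
    (h₀ : ∀ i, (((fun _ => (1:ℂˣ), (1:ℂˣ)) : (Fin n → ℂˣ) × ℂˣ).1 i) ^ d i
      = (((fun _ => (1:ℂˣ), (1:ℂˣ)) : (Fin n → ℂˣ) × ℂˣ).2) ^ e i) :
    (∀ t : ℂˣ, ∃ x ∈ connectedComponent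
        (⟨(fun _ => 1, 1), h₀⟩ :
          {p : (Fin n → ℂˣ) × ℂˣ // ∀ i, p.1 i ^ d i = p.2 ^ e i}),
      (x : (Fin n → ℂˣ) × ℂˣ).2 = t) ∧
    ∀ t : ℂˣ, Nat.card {x : {p : (Fin n → ℂˣ) × ℂˣ // ∀ i, p.1 i ^ d i = p.2 ^ e i} //
        x ∈ connectedComponent (⟨(fun _ => 1, 1), h₀⟩ :
          {p : (Fin n → ℂˣ) × ℂˣ // ∀ i, p.1 i ^ d i = p.2 ^ e i}) ∧
        (x : (Fin n → ℂˣ) × ℂˣ).2 = t} =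
      Finset.univ.lcm (fun i => (d i).toNat / Int.gcd (d i) (e i)) := by
  classical
  obtain ⟨c, α, β, hc, hαβ⟩ := aux_arith n d e hd
  set r : ℕ := Finset.univ.lcm (fun i => (d i).toNat / Int.gcd (d i) (e i)) with hrdef
  have hr0 : r ≠ 0 := aux_r_pos n d e hd
  haveI : NeZero r := ⟨hr0⟩
  set D : ℕ := ∏ i, (d i).toNat with hDdef
  have hD0 : D ≠ 0 := by
    rw [hDdef]
    exact Finset.prod_ne_zero_iff.mpr fun i _ => by have := hd i; omega
  have hdD : ∀ j, ∃ wj : ℤ, (D : ℤ) = d j * wj := by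
    intro j
    obtain ⟨w, hw⟩ := Finset.dvd_prod_of_mem (fun i => (d i).toNat) (Finset.mem_univ j)
    refine ⟨(w : ℤ), ?_⟩
    have h2 : ((d j).toNat : ℤ) = d j := by have := hd j; omega
    rw [← h2, hDdef]
    exact_mod_cast hw
  -- the one-parameter subgroup
  have hφmem : ∀ u : ℂˣ, ∀ i, (u ^ c i) ^ d i = (u ^ (r : ℤ)) ^ e i := by
    intro u i
    rw [← zpow_mul, ← zpow_mul, hc i]
  set φ : ℂˣ → {p : (Fin n → ℂˣ) × ℂˣ // ∀ i, p.1 i ^ d i = p.2 ^ e i} :=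
    fun u => ⟨(fun i => u ^ c i, u ^ (r : ℤ)), hφmem u⟩ with hφdef
  have hφcont : Continuous φ :=
    Continuous.subtype_mk
      (Continuous.prodMk (continuous_pi fun i => continuous_zpow (c i))
        (continuous_zpow _)) _
  set π : ((Fin n → ℂˣ) × ℂˣ) → ℂˣ :=
    fun x => (∏ i, x.1 i ^ α i) * x.2 ^ β with hπdef
  have hπcont : Continuous π :=
    Continuous.mul
      (continuous_finset_prod _ fun i _ =>
        (continuous_zpow (α i)).comp ((continuous_apply i).comp continuous_fst))
      ((continuous_zpow β).comp continuous_snd)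
  have hπφ : ∀ u : ℂˣ, π (φ u).val = u := by
    intro u
    rw [hφdef, hπdef]
    dsimp only
    calc (∏ i, (u ^ c i) ^ α i) * (u ^ (r : ℤ)) ^ β
        = (∏ i, u ^ (α i * c i)) * u ^ (β * (r : ℤ)) := by
          congr 1
          · exact Finset.prod_congr rfl fun i _ => by rw [← zpow_mul, mul_comm]
          · rw [← zpow_mul, mul_comm]
      _ = u ^ ((∑ i, α i * c i) + β * (r : ℤ)) := by
          rw [zpow_add, aux_zpow_sum]
      _ = u := by rw [hαβ, zpow_one]
  set ρ : {p : (Fin n → ℂˣ) × ℂˣ // ∀ i, p.1 i ^ d i = p.2 ^ e i} →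
      ((Fin n → ℂˣ) × ℂˣ) := fun x => (φ (π x.val)).val * (x.val)⁻¹ with hρdef
  have hρcont : Continuous ρ :=
    ((continuous_subtype_val.comp (hφcont.comp (hπcont.comp continuous_subtype_val)))).mul
      (continuous_subtype_val.inv)
  have hρφ : ∀ u, ρ (φ u) = 1 := by
    intro u
    rw [hρdef]
    dsimp only
    rw [hπφ u, mul_inv_cancel]
  have hρ1 : ∀ x, ρ x = 1 → x = φ (π x.val) := by
    intro x hx
    rw [hρdef] at hx
    dsimp only at hx
    exact Subtype.ext (mul_inv_eq_one.mp hx).symm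
  -- the torsion bound
  have hK1 : ∀ x : {p : (Fin n → ℂˣ) × ℂˣ // ∀ i, p.1 i ^ d i = p.2 ^ e i},
      ∀ j, x.val.1 j ^ ((r : ℤ) * (D : ℤ)) = x.val.2 ^ (c j * (D : ℤ)) := by
    intro x j
    obtain ⟨w, hw⟩ := hdD j
    have h1 : (r : ℤ) * (D : ℤ) = d j * ((r : ℤ) * w) := by rw [hw]; ring
    have h2 : c j * (D : ℤ) = e j * ((r : ℤ) * w) := by
      rw [hw]; linear_combination w * hc j
    rw [h1, h2, zpow_mul _ (d j), zpow_mul _ (e j), x.prop j]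
  have hK2 : ∀ x : {p : (Fin n → ℂˣ) × ℂˣ // ∀ i, p.1 i ^ d i = p.2 ^ e i},
      (π x.val) ^ ((r : ℤ) * (D : ℤ)) = x.val.2 ^ (D : ℤ) := by
    intro x
    rw [hπdef]
    dsimp only
    have hfac : ∀ i, (x.val.1 i ^ α i) ^ ((r : ℤ) * (D : ℤ))
        = x.val.2 ^ (c i * (D : ℤ) * α i) := by
      intro i
      rw [← zpow_mul, mul_comm (α i), zpow_mul, hK1 x i, ← zpow_mul]
    calc ((∏ i, x.val.1 i ^ α i) * x.val.2 ^ β) ^ ((r : ℤ) * (D : ℤ))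
        = (∏ i, x.val.2 ^ (c i * (D : ℤ) * α i)) * x.val.2 ^ (β * ((r : ℤ) * (D : ℤ))) := by
          rw [mul_zpow, aux_prod_zpow, ← zpow_mul]
          congr 1
          exact Finset.prod_congr rfl fun i _ => hfac i
      _ = x.val.2 ^ ((∑ i, c i * (D : ℤ) * α i) + β * ((r : ℤ) * (D : ℤ))) := by
          rw [zpow_add, aux_zpow_sum]
      _ = x.val.2 ^ (D : ℤ) := by
          congr 1
          have h1 : (∑ i, c i * (D : ℤ) * α i) = (D : ℤ) * ∑ i, α i * c i := by
            rw [Finset.mul_sum]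
            exact Finset.sum_congr rfl fun i _ => by ring
          rw [h1]
          linear_combination (D : ℤ) * hαβ
  have hρ2N : ∀ x, ((ρ x).2) ^ ((D : ℤ) * (D : ℤ)) = 1 := by
    intro x
    have h2 : (ρ x).2 = (π x.val) ^ (r : ℤ) * (x.val.2)⁻¹ := rfl
    have e1 : ((π x.val) ^ (r : ℤ)) ^ ((D : ℤ) * (D : ℤ))
        = ((π x.val) ^ ((r : ℤ) * (D : ℤ))) ^ (D : ℤ) := by
      rw [← zpow_mul, ← zpow_mul]
      congr 1
      ring
    rw [h2, mul_zpow, e1, hK2 x, ← zpow_mul, inv_zpow, ← zpow_neg, ← zpow_add]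
    simp
  have hρ1N : ∀ x i, ((ρ x).1 i) ^ ((D : ℤ) * (D : ℤ)) = 1 := by
    intro x i
    have h1 : (ρ x).1 i = (π x.val) ^ c i * (x.val.1 i)⁻¹ := rfl
    obtain ⟨w, hw⟩ := hdD i
    have hstep : ((π x.val) ^ c i * (x.val.1 i)⁻¹) ^ (d i * (D : ℤ)) = 1 := by
      have ha : ((π x.val) ^ c i) ^ (d i * (D : ℤ)) = x.val.2 ^ (e i * (D : ℤ)) := by
        rw [← zpow_mul]
        have hexp : c i * (d i * (D : ℤ)) = ((r : ℤ) * (D : ℤ)) * e i := by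
          linear_combination (D : ℤ) * hc i
        rw [hexp, zpow_mul, hK2 x, ← zpow_mul]
        congr 1
        ring
      have hb : ((x.val.1 i)⁻¹) ^ (d i * (D : ℤ)) = (x.val.2 ^ (e i * (D : ℤ)))⁻¹ := by
        rw [inv_zpow, zpow_mul, x.prop i, ← zpow_mul]
      rw [mul_zpow, ha, hb, mul_inv_cancel]
    have hDD : (D : ℤ) * (D : ℤ) = (d i * (D : ℤ)) * w := by
      nth_rewrite 1 [hw]
      ring
    rw [h1, hDD, zpow_mul, hstep, one_zpow]
  -- finiteness of the torsion set
  haveI : NeZero (D * D) := ⟨Nat.mul_ne_zero hD0 hD0⟩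
  have hZ1 : {z : ℂˣ | z ^ ((D : ℤ) * (D : ℤ)) = 1}.Finite := by
    have hset : {z : ℂˣ | z ^ ((D : ℤ) * (D : ℤ)) = 1}
        = ((rootsOfUnity (D * D) ℂ : Subgroup ℂˣ) : Set ℂˣ) := by
      ext z
      rw [Set.mem_setOf_eq, SetLike.mem_coe, mem_rootsOfUnity, ← zpow_natCast]
      push_cast
      rfl
    rw [hset]
    have hfin : Finite ((rootsOfUnity (D * D) ℂ : Subgroup ℂˣ)) := inferInstance
    exact @Set.toFinite _ _ hfin
  set Z : Set ((Fin n → ℂˣ) × ℂˣ) :=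
    {y | (∀ i, y.1 i ^ ((D : ℤ) * (D : ℤ)) = 1) ∧ y.2 ^ ((D : ℤ) * (D : ℤ)) = 1} with hZdef
  have hρZ : ∀ x, ρ x ∈ Z := fun x => ⟨hρ1N x, hρ2N x⟩
  have hZfin : Z.Finite := by
    have hsub : Z ⊆ (Set.pi Set.univ fun _ : Fin n =>
        {z : ℂˣ | z ^ ((D : ℤ) * (D : ℤ)) = 1}) ×ˢ
        {z : ℂˣ | z ^ ((D : ℤ) * (D : ℤ)) = 1} := by
      rintro ⟨y1, y2⟩ ⟨hy1, hy2⟩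
      exact ⟨fun i _ => hy1 i, hy2⟩
    exact Set.Finite.subset (Set.Finite.prod (Set.Finite.pi fun _ => hZ1) hZ1) hsub
  -- clopenness of the range of φ
  have hpre : ρ ⁻¹' {1} = Set.range φ := by
    ext x
    simp only [Set.mem_preimage, Set.mem_singleton_iff, Set.mem_range]
    constructor
    · intro h
      exact ⟨π x.val, (hρ1 x h).symm⟩
    · rintro ⟨u, rfl⟩
      exact hρφ u
  have hclosed : IsClosed (Set.range φ) := by
    rw [← hpre]
    exact isClosed_singleton.preimage hρcont
  have hopen : IsOpen (Set.range φ) := by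
    rw [← hpre]
    have hU : IsOpen (Z \ {1} : Set ((Fin n → ℂˣ) × ℂˣ))ᶜ :=
      ((hZfin.subset Set.diff_subset).isClosed).isOpen_compl
    have heq : ρ ⁻¹' {1} = ρ ⁻¹' (Z \ {1} : Set ((Fin n → ℂˣ) × ℂˣ))ᶜ := by
      ext x
      simp only [Set.mem_preimage, Set.mem_singleton_iff, Set.mem_compl_iff, Set.mem_diff]
      constructor
      · intro h hmem
        exact hmem.2 h
      · intro h
        by_contra hne
        exact h ⟨hρZ x, hne⟩
    rw [heq]
    exact hU.preimage hρcont
  have hx0 : φ 1 = (⟨(fun _ => 1, 1), h₀⟩ :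
      {p : (Fin n → ℂˣ) × ℂˣ // ∀ i, p.1 i ^ d i = p.2 ^ e i}) := by
    apply Subtype.ext
    rw [hφdef]
    dsimp only
    exact Prod.ext (funext fun i => one_zpow _) (one_zpow _)
  -- connectivity of the range of φ
  have hconn : IsPreconnected (Set.range φ) := by
    set E : ℂ → ℂˣ := fun z => Units.mk0 (Complex.exp z) (Complex.exp_ne_zero z) with hEdef
    have hEcont : Continuous E := by
      apply Units.continuous_iff.2
      constructor
      · exact Complex.continuous_exp
      · simp only [hEdef, Units.val_inv_eq_inv_val, Units.val_mk0]
        exact Complex.continuous_exp.inv₀ fun z => Complex.exp_ne_zero z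
    have hEsurj : Function.Surjective E := by
      intro u
      have : (u : ℂ) ∈ Set.range Complex.exp := by
        rw [Complex.range_exp]
        exact u.ne_zero
      obtain ⟨z, hz⟩ := this
      exact ⟨z, Units.ext hz⟩
    have hrange : Set.range φ = Set.range (φ ∘ E) := by
      rw [Set.range_comp, Function.Surjective.range_eq hEsurj, Set.image_univ]
    rw [hrange]
    exact isPreconnected_range (hφcont.comp hEcont)
  have hccsub1 : connectedComponent (⟨(fun _ => 1, 1), h₀⟩ :
      {p : (Fin n → ℂˣ) × ℂˣ // ∀ i, p.1 i ^ d i = p.2 ^ e i}) ⊆ Set.range φ :=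
    IsClopen.connectedComponent_subset ⟨hclosed, hopen⟩ ⟨1, hx0⟩
  have hccsub2 : Set.range φ ⊆ connectedComponent (⟨(fun _ => 1, 1), h₀⟩ :
      {p : (Fin n → ℂˣ) × ℂˣ // ∀ i, p.1 i ^ d i = p.2 ^ e i}) :=
    hconn.subset_connectedComponent ⟨1, hx0⟩
  -- roots
  have hroot : ∀ t : ℂˣ, ∃ u : ℂˣ, u ^ (r : ℤ) = t := by
    intro t
    have htne : ((t : ℂ) ^ (((r : ℕ) : ℂ))⁻¹) ≠ 0 := by
      intro h0
      rw [Complex.cpow_eq_zero_iff] at h0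
      exact t.ne_zero h0.1
    refine ⟨Units.mk0 _ htne, ?_⟩
    apply Units.ext
    rw [zpow_natCast, Units.val_pow_eq_pow_val]
    exact Complex.cpow_nat_inv_pow _ hr0
  constructor
  · -- surjectivity
    intro t
    obtain ⟨u, hu⟩ := hroot t
    exact ⟨φ u, hccsub2 ⟨u, rfl⟩, hu⟩
  · -- fiber count
    intro t
    obtain ⟨u0, hu0⟩ := hroot t
    set F : rootsOfUnity r ℂ → {x : {p : (Fin n → ℂˣ) × ℂˣ // ∀ i, p.1 i ^ d i = p.2 ^ e i} //
        x ∈ connectedComponent (⟨(fun _ => 1, 1), h₀⟩ :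
          {p : (Fin n → ℂˣ) × ℂˣ // ∀ i, p.1 i ^ d i = p.2 ^ e i}) ∧
        (x : (Fin n → ℂˣ) × ℂˣ).2 = t} :=
      fun ζ => ⟨φ (u0 * ζ.val), hccsub2 ⟨u0 * ζ.val, rfl⟩, by
        show (u0 * ζ.val) ^ (r : ℤ) = t
        have hζ : (ζ.val : ℂˣ) ^ (r : ℤ) = 1 := by
          rw [zpow_natCast]
          exact (mem_rootsOfUnity r ζ.val).mp ζ.prop
        rw [mul_zpow, hu0, hζ, mul_one]⟩ with hFdef
    have hFinj : Function.Injective F := by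
      intro ζ1 ζ2 h
      have h2 : φ (u0 * ζ1.val) = φ (u0 * ζ2.val) := congrArg Subtype.val h
      have h3 : u0 * ζ1.val = u0 * ζ2.val := by
        have := congrArg (fun y => π y.val) h2
        simpa only [hπφ] using this
      exact Subtype.ext (mul_left_cancel h3)
    have hFsurj : Function.Surjective F := by
      rintro ⟨x, hx1, hx2⟩
      obtain ⟨u, huφ⟩ := hccsub1 hx1
      have hur : u ^ (r : ℤ) = t := by
        have : (φ u).val.2 = x.val.2 := by rw [huφ]
        rw [hx2] at this
        exact this
      have hζmem : (u0⁻¹ * u) ∈ rootsOfUnity r ℂ := by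
        rw [mem_rootsOfUnity, ← zpow_natCast, mul_zpow, hur, inv_zpow, hu0]
        exact inv_mul_cancel t
      refine ⟨⟨u0⁻¹ * u, hζmem⟩, ?_⟩
      apply Subtype.ext
      show φ (u0 * (u0⁻¹ * u)) = x
      rw [mul_inv_cancel_left]
      exact huφ
    calc Nat.card {x : {p : (Fin n → ℂˣ) × ℂˣ // ∀ i, p.1 i ^ d i = p.2 ^ e i} //
        x ∈ connectedComponent (⟨(fun _ => 1, 1), h₀⟩ :
          {p : (Fin n → ℂˣ) × ℂˣ // ∀ i, p.1 i ^ d i = p.2 ^ e i}) ∧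
        (x : (Fin n → ℂˣ) × ℂˣ).2 = t}
        = Nat.card (rootsOfUnity r ℂ) := (Nat.card_eq_of_bijective F ⟨hFinj, hFsurj⟩).symm
      _ = r := by rw [Complex.card_rootsOfUnity]

theorem stmt_11 (n : ℕ) (hn : 1 ≤ n) (d : Fin n → ℤ) (e : Fin n → ℤ)
    (hd : ∀ i, 1 ≤ d i) :
    (∀ t : ℂˣ, ∃ x ∈ connectedComponent
        (⟨(fun _ => 1, 1), by simp⟩ :
          {p : (Fin n → ℂˣ) × ℂˣ // ∀ i, p.1 i ^ d i = p.2 ^ e i}),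
      (x : (Fin n → ℂˣ) × ℂˣ).2 = t) ∧
    ∀ t : ℂˣ, Nat.card {x : {p : (Fin n → ℂˣ) × ℂˣ // ∀ i, p.1 i ^ d i = p.2 ^ e i} //
        x ∈ connectedComponent (⟨(fun _ => 1, 1), by simp⟩ :
          {p : (Fin n → ℂˣ) × ℂˣ // ∀ i, p.1 i ^ d i = p.2 ^ e i}) ∧
        (x : (Fin n → ℂˣ) × ℂˣ).2 = t} =
      Finset.univ.lcm (fun i => (d i).toNat / Int.gcd (d i) (e i)) := by
  exact aux_main n d e hd (by simp)
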